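/- Let μ ⊆ λ be Young diagrams. The concatenation map T = (T⁽¹⁾,…,T⁽ᵏ⁾) ↦ ⊔ᵢ T⁽ⁱ⁾ is a bijection from the set Fix(λ/μ) of fixed points of Φ onto the set RSPP(λ/μ) of row-strict plane partitions of shape λ/μ, and this bijection preserves weight: wt(T) = x^{⊔ᵢ T⁽ⁱ⁾}. -/

import Mathlib

/-- The cells of the skew shape `λ/μ`. -/
def skewCells (μ lam : YoungDiagram) : Finset (ℕ × ℕ) := lam.cells \ μ.cells

/-- The total order on cells induced by a filling `f`: a cell `c = (i,j)` is smaller than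
`c' = (i',j')` if `f c < f c'`, or `f c = f c'` and `j < j'`, or
`f c = f c'`, `j = j'` and `i > i'`. -/
def cellLT (f : ℕ × ℕ → ℕ) (c c' : ℕ × ℕ) : Prop :=
  f c < f c' ∨ (f c = f c' ∧ (c.2 < c'.2 ∨ (c.2 = c'.2 ∧ c'.1 < c.1)))

/-- `f` is a semistandard filling on the cell set `s`: entries are positive,
weakly increasing along rows (left to right) and strictly increasing down columns. -/
def IsSSYTOn (f : ℕ × ℕ → ℕ) (s : Finset (ℕ × ℕ)) : Prop :=
  (∀ c ∈ s, 0 < f c) ∧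
  (∀ i j j', j ≤ j' → (i, j) ∈ s → (i, j') ∈ s → f (i, j) ≤ f (i, j')) ∧
  (∀ i i' j, i < i' → (i, j) ∈ s → (i', j) ∈ s → f (i, j) < f (i', j))

/-- An element of `X_μ^λ`: a chain `μ = λ₀ ⊊ λ₁ ⊊ ⋯ ⊊ λ_k = λ` of Young diagrams together
with a filling of `λ/μ` whose restriction to each piece `λᵢ₊₁/λᵢ` is a semistandard Young
tableau.  (The tuple `(T⁽¹⁾, …, T⁽ᵏ⁾)` is recorded as the single concatenated filling
`entry`, normalized to be `0` outside `λ/μ`; the chain is recorded as a function on `ℕ`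
constantly equal to `λ` from index `k` on.) -/
structure XTuple (μ lam : YoungDiagram) where
  k : ℕ
  chain : ℕ → YoungDiagram
  chain_zero : chain 0 = μ
  chain_last : ∀ i, k ≤ i → chain i = lam
  chain_strict : ∀ i < k, (chain i).cells ⊂ (chain (i + 1)).cells
  entry : ℕ × ℕ → ℕ
  entry_eq_zero : ∀ c ∉ skewCells μ lam, entry c = 0
  piece_ssyt : ∀ i < k, IsSSYTOn entry ((chain (i + 1)).cells \ (chain i).cells)

/-- The cells of the `i`-th piece `T⁽ⁱ⁺¹⁾` (0-indexed: piece `i` has shape `λᵢ₊₁/λᵢ`). -/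
def pieceCells {μ lam : YoungDiagram} (T : XTuple μ lam) (i : ℕ) : Finset (ℕ × ℕ) :=
  (T.chain (i + 1)).cells \ (T.chain i).cells

/-- The length `ℓ(T) = k` of an element of `X_μ^λ`. -/
def XTuple.len {μ lam : YoungDiagram} (T : XTuple μ lam) : ℕ := T.k

/-- The cell `c`, lying in piece `i`, is splittable: its piece has more than one cell and
`c` is the largest cell of its piece. -/
def SplittableAt {μ lam : YoungDiagram} (T : XTuple μ lam) (c : ℕ × ℕ) (i : ℕ) : Prop :=
  i < T.k ∧ c ∈ pieceCells T i ∧ 1 < (pieceCells T i).card ∧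
    ∀ c' ∈ pieceCells T i, c' ≠ c → cellLT T.entry c' c

/-- The cell `c` is splittable in `T`. -/
def SplittableCell {μ lam : YoungDiagram} (T : XTuple μ lam) (c : ℕ × ℕ) : Prop :=
  ∃ i, SplittableAt T c i

/-- The cell `c`, lying in piece `i`, is mergeable: it is not in the first piece, its piece
is a single cell, the union of its piece with the previous piece is semistandard, and `c`
is larger than every cell of the previous piece. -/
def MergeableAt {μ lam : YoungDiagram} (T : XTuple μ lam) (c : ℕ × ℕ) (i : ℕ) : Prop :=
  1 ≤ i ∧ i < T.k ∧ c ∈ pieceCells T i ∧ (pieceCells T i).card = 1 ∧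
    IsSSYTOn T.entry (pieceCells T (i - 1) ∪ pieceCells T i) ∧
    ∀ c' ∈ pieceCells T (i - 1), cellLT T.entry c' c

/-- The cell `c` is mergeable in `T`. -/
def MergeableCell {μ lam : YoungDiagram} (T : XTuple μ lam) (c : ℕ × ℕ) : Prop :=
  ∃ i, MergeableAt T c i

/-- `cell(T)`: the largest cell of `T` (in the total order `cellLT T.entry`) among the
splittable or mergeable cells, or `none` (i.e. `∅`) if there is no such cell. -/
noncomputable def cellOf {μ lam : YoungDiagram} (T : XTuple μ lam) : Option (ℕ × ℕ) := by
  classical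
  exact if h : ∃ c, (SplittableCell T c ∨ MergeableCell T c) ∧
      ∀ c', (SplittableCell T c' ∨ MergeableCell T c') → c' ≠ c → cellLT T.entry c' c
    then some h.choose else none

/-- `T` is splittable if `cell(T)` is a splittable cell. -/
def XTuple.Splittable {μ lam : YoungDiagram} (T : XTuple μ lam) : Prop :=
  ∃ c, cellOf T = some c ∧ SplittableCell T c

/-- `T` is mergeable if `cell(T)` is a mergeable cell. -/
def XTuple.Mergeable {μ lam : YoungDiagram} (T : XTuple μ lam) : Prop :=
  ∃ c, cellOf T = some c ∧ MergeableCell T c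

/-- The graph of the map `Φ`:  if `cell(T)` is splittable and lies in piece `i`, the piece
is replaced by the pair `(T⁽ⁱ⁾ ∖ {cell(T)}, {cell(T)})`, i.e. the Young diagram
`λᵢ₊₁ ∖ {cell(T)}` is inserted into the chain; if `cell(T)` is mergeable and lies in piece
`i`, the pieces `i-1` and `i` are merged, i.e. `λᵢ` is deleted from the chain; if
`cell(T) = ∅` then `T` is fixed.  The filling is unchanged in all cases. -/
def PhiRel {μ lam : YoungDiagram} (T T' : XTuple μ lam) : Prop :=
  (∃ c i, cellOf T = some c ∧ SplittableAt T c i ∧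
      T'.k = T.k + 1 ∧ T'.entry = T.entry ∧
      (∀ j, j ≤ i → T'.chain j = T.chain j) ∧
      (T'.chain (i + 1)).cells = (T.chain (i + 1)).cells.erase c ∧
      (∀ j, i + 2 ≤ j → T'.chain j = T.chain (j - 1))) ∨
  (∃ c i, cellOf T = some c ∧ MergeableAt T c i ∧
      T'.k + 1 = T.k ∧ T'.entry = T.entry ∧
      (∀ j, j < i → T'.chain j = T.chain j) ∧
      (∀ j, i ≤ j → T'.chain j = T.chain (j + 1))) ∨
  (cellOf T = none ∧ T' = T)

/-- The map `Φ : X_μ^λ → X_μ^λ`. -/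
noncomputable def Phi {μ lam : YoungDiagram} (T : XTuple μ lam) : XTuple μ lam := by
  classical
  exact if h : ∃ T', PhiRel T T' then h.choose else T

open scoped BigOperators

/-- The weight `wt(T) = ∏ᵢ x^{T⁽ⁱ⁾} = ∏_{c ∈ λ/μ} x_{T(c)}`, as a polynomial in the
commuting variables `x₀, x₁, x₂, …` (only `x₁, x₂, …` occur, since entries are positive). -/
noncomputable def wt {μ lam : YoungDiagram} (T : XTuple μ lam) : MvPolynomial ℕ ℤ :=
  ∏ c ∈ skewCells μ lam, MvPolynomial.X (T.entry c)

/-- `f` is a row-strict plane partition on the cell set `s`: entries are positive,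
strictly decreasing along rows (left to right) and weakly decreasing down columns. -/
def IsRSPPOn (f : ℕ × ℕ → ℕ) (s : Finset (ℕ × ℕ)) : Prop :=
  (∀ c ∈ s, 0 < f c) ∧
  (∀ i j j', j < j' → (i, j) ∈ s → (i, j') ∈ s → f (i, j') < f (i, j)) ∧
  (∀ i i' j, i ≤ i' → (i, j) ∈ s → (i', j) ∈ s → f (i', j) ≤ f (i, j))

open scoped BigOperators
noncomputable section
open Classical

/-- Linear key realizing the order `cellLT f`. -/
def keyf (f : ℕ × ℕ → ℕ) (c : ℕ × ℕ) : ℕ ×ₗ (ℕ ×ₗ ℕᵒᵈ) :=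
  toLex (f c, toLex (c.2, OrderDual.toDual c.1))

lemma cellLT_iff_keyf {f : ℕ × ℕ → ℕ} {c c' : ℕ × ℕ} :
    cellLT f c c' ↔ keyf f c < keyf f c' := by
  unfold cellLT keyf
  rw [Prod.Lex.lt_iff]
  simp only [Prod.Lex.lt_iff]
  constructor
  · rintro (h | ⟨h1, h2 | ⟨h2, h3⟩⟩)
    · exact Or.inl h
    · exact Or.inr ⟨h1, Or.inl h2⟩
    · exact Or.inr ⟨h1, Or.inr ⟨h2, h3⟩⟩
  · rintro (h | ⟨h1, h2 | ⟨h2, h3⟩⟩)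
    · exact Or.inl h
    · exact Or.inr ⟨h1, Or.inl h2⟩
    · exact Or.inr ⟨h1, Or.inr ⟨h2, h3⟩⟩

lemma keyf_injective (f : ℕ × ℕ → ℕ) : Function.Injective (keyf f) := by
  intro c c' h
  unfold keyf at h
  rw [toLex_inj, Prod.mk.injEq, toLex_inj, Prod.mk.injEq] at h
  exact Prod.ext (OrderDual.toDual.injective h.2.2) h.2.1

lemma cellLT_of_ne_of_not {f : ℕ × ℕ → ℕ} {c c' : ℕ × ℕ} (hne : c ≠ c')
    (h : ¬ cellLT f c c') : cellLT f c' c := by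
  rw [cellLT_iff_keyf] at *
  rcases lt_trichotomy (keyf f c) (keyf f c') with h1 | h1 | h1
  · exact absurd h1 h
  · exact absurd (keyf_injective f h1) hne
  · exact h1

end
section ChainBasics
open Classical
variable {μ lam : YoungDiagram} (T : XTuple μ lam)

lemma chain_sub_succ (i : ℕ) : (T.chain i).cells ⊆ (T.chain (i + 1)).cells := by
  by_cases h : i < T.k
  · exact (T.chain_strict i h).1
  · rw [T.chain_last i (le_of_not_gt h), T.chain_last (i+1) (le_trans (le_of_not_gt h) (Nat.le_succ i))]

lemma chain_mono {a b : ℕ} (h : a ≤ b) : (T.chain a).cells ⊆ (T.chain b).cells := by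
  induction b with
  | zero => simp_all
  | succ n ih =>
    rcases Nat.lt_or_ge a (n+1) with h1 | h1
    · exact (ih (Nat.lt_succ_iff.mp h1)).trans (chain_sub_succ T n)
    · have : a = n + 1 := le_antisymm h h1
      subst this; exact subset_rfl

lemma mu_sub_chain (i : ℕ) : μ.cells ⊆ (T.chain i).cells := by
  have := chain_mono T (Nat.zero_le i); rwa [T.chain_zero] at this

lemma chain_sub_lam (i : ℕ) : (T.chain i).cells ⊆ lam.cells := by
  rcases Nat.lt_or_ge i T.k with h | h
  · have := chain_mono T (le_of_lt h); rwa [T.chain_last T.k le_rfl] at this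
  · rw [T.chain_last i h]

lemma pieceCells_sub_skew (i : ℕ) : pieceCells T i ⊆ skewCells μ lam := by
  intro c hc
  rw [pieceCells, Finset.mem_sdiff] at hc
  rw [skewCells, Finset.mem_sdiff]
  exact ⟨chain_sub_lam T (i+1) hc.1, fun h => hc.2 (mu_sub_chain T i h)⟩

lemma pieceCells_disjoint {a b : ℕ} (h : a < b) : Disjoint (pieceCells T a) (pieceCells T b) := by
  rw [Finset.disjoint_left]
  intro c hca hcb
  rw [pieceCells, Finset.mem_sdiff] at hca hcb
  exact hcb.2 (chain_mono T h hca.1)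

lemma exists_piece_mem {c : ℕ × ℕ} (hc : c ∈ skewCells μ lam) :
    ∃ i < T.k, c ∈ pieceCells T i := by
  rw [skewCells, Finset.mem_sdiff] at hc
  have hk : 0 < T.k := by
    by_contra h
    have := T.chain_last 0 (Nat.le_of_not_lt (by simpa using h))
    rw [T.chain_zero] at this
    exact hc.2 (this ▸ hc.1)
  have hex : ∃ i, c ∈ (T.chain (i + 1)).cells := by
    refine ⟨T.k - 1, ?_⟩
    rw [Nat.sub_add_cancel hk, T.chain_last T.k le_rfl]; exact hc.1
  set i := Nat.find hex with hi
  have h1 : c ∈ (T.chain (i + 1)).cells := Nat.find_spec hex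
  have h2 : c ∉ (T.chain i).cells := by
    cases' Nat.eq_zero_or_pos i with h h
    · rw [h, T.chain_zero]; exact hc.2
    · intro hmem
      exact Nat.find_min hex (show i - 1 < i from Nat.sub_lt h one_pos)
        (by rwa [Nat.sub_add_cancel h])
  have hik : i < T.k := by
    by_contra h
    exact h2 (by rw [T.chain_last i (Nat.le_of_not_lt h)]; exact hc.1)
  exact ⟨i, hik, by rw [pieceCells, Finset.mem_sdiff]; exact ⟨h1, h2⟩⟩

lemma piece_unique {c : ℕ × ℕ} {a b : ℕ} (ha : c ∈ pieceCells T a) (hb : c ∈ pieceCells T b) :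
    a = b := by
  rcases lt_trichotomy a b with h | h | h
  · exact absurd hb (Finset.disjoint_left.mp (pieceCells_disjoint T h) ha)
  · exact h
  · exact absurd ha (Finset.disjoint_left.mp (pieceCells_disjoint T h) hb)

lemma mem_chain_of_le {c c' : ℕ × ℕ} {i : ℕ} (h1 : c.1 ≤ c'.1) (h2 : c.2 ≤ c'.2)
    (hc' : c' ∈ (T.chain i).cells) : c ∈ (T.chain i).cells := by
  rw [YoungDiagram.mem_cells] at *
  have := YoungDiagram.up_left_mem (T.chain i) h1 h2 (show (c'.1, c'.2) ∈ T.chain i by simpa using hc')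
  simpa using this

/-- A cell of a later piece cannot lie (weakly) up-left of a cell of an earlier-or-equal
chain stage. -/
lemma not_up_left {c c' : ℕ × ℕ} {a b : ℕ} (ha : c ∈ pieceCells T a) (hb : c' ∈ pieceCells T b)
    (hab : b < a) (h1 : c.1 ≤ c'.1) (h2 : c.2 ≤ c'.2) : False := by
  rw [pieceCells, Finset.mem_sdiff] at ha hb
  have : c' ∈ (T.chain a).cells := chain_mono T hab hb.1
  exact ha.2 (mem_chain_of_le T h1 h2 this)

end ChainBasics
section CellOf
open Classical
variable {μ lam : YoungDiagram} (T : XTuple μ lam)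

lemma ssyt_singleton {f : ℕ × ℕ → ℕ} {c : ℕ × ℕ} (h : 0 < f c) : IsSSYTOn f {c} := by
  refine ⟨fun c' hc' => by rwa [Finset.mem_singleton.mp hc'], ?_, ?_⟩
  · intro i j j' hjj h1 h2
    rw [Finset.mem_singleton] at h1 h2
    rw [h1, h2]
  · intro i i' j hii h1 h2
    rw [Finset.mem_singleton] at h1 h2
    rw [← h2] at h1
    exact absurd (congrArg Prod.fst h1) (Nat.ne_of_lt hii)

lemma ssyt_subset {f : ℕ × ℕ → ℕ} {s t : Finset (ℕ × ℕ)} (hst : s ⊆ t)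
    (h : IsSSYTOn f t) : IsSSYTOn f s :=
  ⟨fun c hc => h.1 c (hst hc), fun i j j' hj h1 h2 => h.2.1 i j j' hj (hst h1) (hst h2),
   fun i i' j hi h1 h2 => h.2.2 i i' j hi (hst h1) (hst h2)⟩

/-- If there is any splittable or mergeable cell then `cellOf T` is `some`. -/
lemma cellOf_ne_none (hex : ∃ c, SplittableCell T c ∨ MergeableCell T c) :
    cellOf T ≠ none := by
  have hP : ∃ c, (SplittableCell T c ∨ MergeableCell T c) ∧
      ∀ c', (SplittableCell T c' ∨ MergeableCell T c') → c' ≠ c → cellLT T.entry c' c := by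
    obtain ⟨c₀, hc₀⟩ := hex
    classical
    set S : Finset (ℕ × ℕ) :=
      (skewCells μ lam).filter (fun c => SplittableCell T c ∨ MergeableCell T c) with hS
    have hmemS : ∀ c, (SplittableCell T c ∨ MergeableCell T c) → c ∈ S := by
      intro c hc
      rw [hS, Finset.mem_filter]
      refine ⟨?_, hc⟩
      rcases hc with ⟨i, h⟩ | ⟨i, h⟩
      · exact pieceCells_sub_skew T i h.2.1
      · exact pieceCells_sub_skew T i h.2.2.1
    obtain ⟨c, hcS, hmax⟩ := Finset.exists_max_image S (keyf T.entry) ⟨c₀, hmemS c₀ hc₀⟩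
    refine ⟨c, (Finset.mem_filter.mp hcS).2, ?_⟩
    intro c' hc' hne
    rw [cellLT_iff_keyf]
    exact lt_of_le_of_ne (hmax c' (hmemS c' hc')) (fun h => hne (keyf_injective _ h))
  rw [cellOf]
  intro h
  split at h
  · exact Option.some_ne_none _ h
  · exact absurd hP (by assumption)

lemma cellOf_eq_some_spec {c : ℕ × ℕ} (h : cellOf T = some c) :
    SplittableCell T c ∨ MergeableCell T c := by
  rw [cellOf] at h
  split at h
  · next hP =>
    have := hP.choose_spec.1
    rwa [Option.some_inj.mp h] at this
  · exact absurd h (by simp)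

lemma cellOf_eq_none_of_empty
    (h : ∀ c, ¬ SplittableCell T c ∧ ¬ MergeableCell T c) : cellOf T = none := by
  rw [cellOf]
  split
  · next hP =>
    have hc := hP.choose_spec.1
    rcases hc with hc | hc
    · exact absurd hc (h _).1
    · exact absurd hc (h _).2

  · rfl

end CellOf
section Split
open Classical
variable {μ lam : YoungDiagram} {T : XTuple μ lam} {c : ℕ × ℕ} {i : ℕ}

lemma corner_right (hs : SplittableAt T c i) : (c.1, c.2 + 1) ∉ (T.chain (i+1)).cells := by
  obtain ⟨hik, hcp, hcard, hmax⟩ := hs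
  intro hr
  have hcp' : (c.1, c.2) ∈ pieceCells T i := by rw [Prod.mk.eta]; exact hcp
  have hrp : (c.1, c.2 + 1) ∈ pieceCells T i := by
    rw [pieceCells, Finset.mem_sdiff]
    refine ⟨hr, fun h => ?_⟩
    rw [pieceCells, Finset.mem_sdiff] at hcp
    exact hcp.2 (mem_chain_of_le T (c := c) (c' := (c.1, c.2 + 1)) (le_refl _) (Nat.le_succ _) h)
  have hne : (c.1, c.2 + 1) ≠ c := by
    intro h; have := congrArg Prod.snd h; simp at this
  have hlt := hmax _ hrp hne
  have hrow := (T.piece_ssyt i hik).2.1 c.1 c.2 (c.2+1) (Nat.le_succ c.2) hcp' hrp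
  rw [Prod.mk.eta] at hrow
  rcases hlt with h | ⟨h1, h2 | ⟨h2, h3⟩⟩
  · omega
  · simp only at h2; omega
  · simp only at h2; omega

lemma corner_below (hs : SplittableAt T c i) : (c.1 + 1, c.2) ∉ (T.chain (i+1)).cells := by
  obtain ⟨hik, hcp, hcard, hmax⟩ := hs
  intro hr
  have hcp' : (c.1, c.2) ∈ pieceCells T i := by rw [Prod.mk.eta]; exact hcp
  have hrp : (c.1 + 1, c.2) ∈ pieceCells T i := by
    rw [pieceCells, Finset.mem_sdiff]
    refine ⟨hr, fun h => ?_⟩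
    rw [pieceCells, Finset.mem_sdiff] at hcp
    exact hcp.2 (mem_chain_of_le T (c := c) (c' := (c.1 + 1, c.2)) (Nat.le_succ _) (le_refl _) h)
  have hne : (c.1 + 1, c.2) ≠ c := by
    intro h; have := congrArg Prod.fst h; simp at this
  have hlt := hmax _ hrp hne
  have hcol := (T.piece_ssyt i hik).2.2 c.1 (c.1+1) c.2 (Nat.lt_succ_self c.1) hcp' hrp
  rw [Prod.mk.eta] at hcol
  rcases hlt with h | ⟨h1, h2 | ⟨h2, h3⟩⟩
  · omega
  · simp only at h2; omega
  · simp only at h3; omega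

/-- The Young diagram obtained by removing the (corner) cell of a splittable position. -/
def splitDiagram (hs : SplittableAt T c i) : YoungDiagram where
  cells := (T.chain (i+1)).cells.erase c
  isLowerSet := by
    intro a b hba ha
    simp only [Finset.coe_erase, Set.mem_diff, Set.mem_singleton_iff, Finset.mem_coe,
      Finset.mem_erase] at ha ⊢
    refine ⟨(T.chain (i+1)).isLowerSet hba ha.1, ?_⟩
    rintro rfl
    obtain ⟨hne, hmem⟩ : b ≠ a ∧ a ∈ (T.chain (i+1)).cells :=
      ⟨fun h => ha.2 h.symm, ha.1⟩
    have h1 : b.1 ≤ a.1 := hba.1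
    have h2 : b.2 ≤ a.2 := hba.2
    rcases Nat.lt_or_ge b.1 a.1 with h | h
    · exact corner_below hs (mem_chain_of_le T (c := (b.1 + 1, b.2)) (c' := a)
        (by omega) (by simpa using h2) hmem)
    · have hb1 : b.1 = a.1 := by omega
      have hb2 : b.2 < a.2 := by
        rcases Nat.lt_or_ge b.2 a.2 with h' | h'
        · exact h'
        · exact absurd (Prod.ext hb1 (by omega)) hne
      exact corner_right hs (mem_chain_of_le T (c := (b.1, b.2 + 1)) (c' := a)
        (by simpa using h1) (by omega) hmem)

end Split
section SplitTuple
open Classical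
variable {μ lam : YoungDiagram} {T : XTuple μ lam} {c : ℕ × ℕ} {i : ℕ}

noncomputable def splitTuple (hs : SplittableAt T c i) : XTuple μ lam where
  k := T.k + 1
  chain := fun j => if j ≤ i then T.chain j else if j = i + 1 then splitDiagram hs else T.chain (j-1)
  chain_zero := by
    beta_reduce
    rw [if_pos (Nat.zero_le i)]; exact T.chain_zero
  chain_last := by
    intro j hj
    beta_reduce
    have hik : i < T.k := hs.1
    rw [if_neg (by omega), if_neg (by omega)]
    exact T.chain_last (j-1) (by omega)
  chain_strict := by
    intro j hj
    beta_reduce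
    have hik : i < T.k := hs.1
    have hcsub : (T.chain i).cells ⊆ (splitDiagram hs).cells := by
      intro x hx
      rw [splitDiagram, Finset.mem_erase]
      have hcp := hs.2.1
      rw [pieceCells, Finset.mem_sdiff] at hcp
      exact ⟨fun h => hcp.2 (h ▸ hx), chain_sub_succ T i hx⟩
    rcases Nat.lt_or_ge j i with h | h
    · rw [if_pos (by omega), if_pos (by omega)]
      exact T.chain_strict j (by omega)
    rcases Nat.eq_or_lt_of_le h with h' | h'
    · -- j = i
      subst h'
      rw [if_pos (le_refl i), if_neg (by omega), if_pos rfl]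
      refine ⟨hcsub, ?_⟩
      intro hsub
      obtain ⟨a, ha, b, hb, hab⟩ := Finset.one_lt_card.mp hs.2.2.1
      have hd : ∃ d ∈ pieceCells T i, d ≠ c := by
        by_cases hac : a = c
        · exact ⟨b, hb, fun h => hab (hac.trans h.symm)⟩
        · exact ⟨a, ha, hac⟩
      obtain ⟨d, hd1, hd2⟩ := hd
      have : d ∈ (splitDiagram hs).cells := by
        rw [splitDiagram, Finset.mem_erase]
        rw [pieceCells, Finset.mem_sdiff] at hd1
        exact ⟨hd2, hd1.1⟩
      rw [pieceCells, Finset.mem_sdiff] at hd1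
      exact hd1.2 (hsub this)
    rcases Nat.eq_or_lt_of_le h' with h'' | h''
    · -- j = i + 1
      rw [if_neg (by omega), if_pos h''.symm, if_neg (by omega), if_neg (by omega)]
      have : j + 1 - 1 = i + 1 := by omega
      rw [this]
      rw [splitDiagram]
      exact Finset.erase_ssubset (by
        have hcp := hs.2.1
        rw [pieceCells, Finset.mem_sdiff] at hcp
        exact hcp.1)
    · -- j ≥ i + 2
      rw [if_neg (by omega), if_neg (by omega), if_neg (by omega), if_neg (by omega)]
      have h1 : j + 1 - 1 = (j - 1) + 1 := by omega
      rw [h1]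
      exact T.chain_strict (j-1) (by omega)
  entry := T.entry
  entry_eq_zero := T.entry_eq_zero
  piece_ssyt := by
    intro j hj
    beta_reduce
    have hik : i < T.k := hs.1
    rcases Nat.lt_or_ge j i with h | h
    · rw [if_pos (by omega : j + 1 ≤ i), if_pos (by omega : j ≤ i)]
      exact T.piece_ssyt j (by omega)
    rcases Nat.eq_or_lt_of_le h with h' | h'
    · subst h'
      rw [if_neg (by omega), if_pos rfl, if_pos (le_refl i)]
      refine ssyt_subset ?_ (T.piece_ssyt i (by omega))
      intro x hx
      rw [Finset.mem_sdiff] at hx ⊢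
      rw [splitDiagram, Finset.mem_erase] at hx
      exact ⟨hx.1.2, hx.2⟩
    rcases Nat.eq_or_lt_of_le h' with h'' | h''
    · -- j = i+1 : singleton {c}
      rw [if_neg (by omega), if_pos h''.symm, if_neg (by omega), if_neg (by omega)]
      have : j + 1 - 1 = i + 1 := by omega
      rw [this]
      have hset : (T.chain (i+1)).cells \ (splitDiagram hs).cells = {c} := by
        rw [splitDiagram]
        ext x
        simp only [Finset.mem_sdiff, Finset.mem_erase, Finset.mem_singleton, not_and]
        constructor
        · rintro ⟨hx1, hx2⟩
          by_contra hne
          exact (hx2 hne) hx1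
        · rintro rfl
          have hcp := hs.2.1
          rw [pieceCells, Finset.mem_sdiff] at hcp
          exact ⟨hcp.1, fun h _ => absurd rfl h⟩
      rw [hset]
      exact ssyt_singleton ((T.piece_ssyt i hik).1 c hs.2.1)
    · rw [if_neg (by omega), if_neg (by omega), if_neg (by omega), if_neg (by omega)]
      have h1 : j + 1 - 1 = (j - 1) + 1 := by omega
      rw [h1]
      exact T.piece_ssyt (j-1) (by omega)

lemma splitTuple_spec (hs : SplittableAt T c i) :
    (splitTuple hs).k = T.k + 1 ∧ (splitTuple hs).entry = T.entry ∧
    (∀ j, j ≤ i → (splitTuple hs).chain j = T.chain j) ∧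
    ((splitTuple hs).chain (i + 1)).cells = (T.chain (i + 1)).cells.erase c ∧
    (∀ j, i + 2 ≤ j → (splitTuple hs).chain j = T.chain (j - 1)) := by
  refine ⟨rfl, rfl, ?_, ?_, ?_⟩
  · intro j hj; show (if j ≤ i then _ else _) = _; rw [if_pos hj]
  · show (if i + 1 ≤ i then T.chain (i+1) else if i + 1 = i + 1 then splitDiagram hs
      else T.chain (i+1-1)).cells = _
    rw [if_neg (by omega), if_pos rfl]; rfl
  · intro j hj; show (if j ≤ i then _ else if j = i + 1 then _ else _) = _
    rw [if_neg (by omega), if_neg (by omega)]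

end SplitTuple
section MergeTuple
open Classical
variable {μ lam : YoungDiagram} {T : XTuple μ lam} {c : ℕ × ℕ} {i : ℕ}

lemma sdiff_union_sdiff {A B C : Finset (ℕ × ℕ)} (h1 : A ⊆ B) (h2 : B ⊆ C) :
    C \ A = (B \ A) ∪ (C \ B) := by
  ext x
  simp only [Finset.mem_sdiff, Finset.mem_union]
  constructor
  · rintro ⟨hC, hA⟩
    by_cases hB : x ∈ B
    · exact Or.inl ⟨hB, hA⟩
    · exact Or.inr ⟨hC, hB⟩
  · rintro (⟨hB, hA⟩ | ⟨hC, hB⟩)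
    · exact ⟨h2 hB, hA⟩
    · exact ⟨hC, fun h => hB (h1 h)⟩

noncomputable def mergeTuple (hm : MergeableAt T c i) : XTuple μ lam where
  k := T.k - 1
  chain := fun j => if j < i then T.chain j else T.chain (j + 1)
  chain_zero := by
    beta_reduce
    rw [if_pos (show 0 < i by have := hm.1; omega)]; exact T.chain_zero
  chain_last := by
    intro j hj
    have h1 : 1 ≤ i := hm.1
    have h2 : i < T.k := hm.2.1
    beta_reduce
    rw [if_neg (by omega)]
    exact T.chain_last (j+1) (by omega)
  chain_strict := by
    intro j hj
    have h1 : 1 ≤ i := hm.1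
    have h2 : i < T.k := hm.2.1
    beta_reduce
    rcases Nat.lt_or_ge (j+1) i with h | h
    · rw [if_pos (by omega), if_pos h]
      exact T.chain_strict j (by omega)
    rcases Nat.eq_or_lt_of_le h with h' | h'
    · rw [if_pos (by omega), if_neg (by omega)]
      exact Finset.ssubset_of_ssubset_of_subset (T.chain_strict j (by omega))
        (h' ▸ chain_sub_succ T (j+1))
    · rw [if_neg (by omega), if_neg (by omega)]
      exact T.chain_strict (j+1) (by omega)
  entry := T.entry
  entry_eq_zero := T.entry_eq_zero
  piece_ssyt := by
    intro j hj
    have h1 : 1 ≤ i := hm.1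
    have h2 : i < T.k := hm.2.1
    beta_reduce
    rcases Nat.lt_or_ge (j+1) i with h | h
    · rw [if_pos h, if_pos (show j < i by omega)]
      exact T.piece_ssyt j (by omega)
    rcases Nat.eq_or_lt_of_le h with h' | h'
    · rw [if_neg (show ¬ j + 1 < i by omega), if_pos (show j < i by omega)]
      have hset : (T.chain (j + 1 + 1)).cells \ (T.chain j).cells =
          pieceCells T (i - 1) ∪ pieceCells T i := by
        have hji : j = i - 1 := by omega
        have hi1 : i - 1 + 1 = i := by omega
        rw [pieceCells, pieceCells, hji, hi1]
        exact sdiff_union_sdiff (hi1 ▸ chain_sub_succ T (i-1)) (chain_sub_succ T i)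
      rw [hset]
      exact hm.2.2.2.2.1
    · rw [if_neg (show ¬ j + 1 < i by omega), if_neg (show ¬ j < i by omega)]
      exact T.piece_ssyt (j+1) (by omega)

lemma mergeTuple_spec (hm : MergeableAt T c i) :
    (mergeTuple hm).k + 1 = T.k ∧ (mergeTuple hm).entry = T.entry ∧
    (∀ j, j < i → (mergeTuple hm).chain j = T.chain j) ∧
    (∀ j, i ≤ j → (mergeTuple hm).chain j = T.chain (j + 1)) := by
  have h1 : 1 ≤ i := hm.1
  have h2 : i < T.k := hm.2.1
  refine ⟨by show T.k - 1 + 1 = T.k; omega, rfl, ?_, ?_⟩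
  · intro j hj; show (if j < i then _ else _) = _; rw [if_pos hj]
  · intro j hj; show (if j < i then _ else _) = _; rw [if_neg (by omega)]

end MergeTuple
section PhiFixed
open Classical
variable {μ lam : YoungDiagram}

lemma phiRel_exists_of_some {T : XTuple μ lam} {c : ℕ × ℕ} (hc : cellOf T = some c) :
    ∃ T', PhiRel T T' := by
  rcases cellOf_eq_some_spec T hc with ⟨i, hs⟩ | ⟨i, hm⟩
  · obtain ⟨h1, h2, h3, h4, h5⟩ := splitTuple_spec hs
    exact ⟨splitTuple hs, Or.inl ⟨c, i, hc, hs, h1, h2, h3, h4, h5⟩⟩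
  · obtain ⟨h1, h2, h3, h4⟩ := mergeTuple_spec hm
    exact ⟨mergeTuple hm, Or.inr (Or.inl ⟨c, i, hc, hm, h1, h2, h3, h4⟩)⟩

lemma phi_fixed_iff (T : XTuple μ lam) : Phi T = T ↔ cellOf T = none := by
  constructor
  · intro hfix
    rw [Phi] at hfix
    rcases h : cellOf T with _ | c
    · rfl
    exfalso
    have hex := phiRel_exists_of_some h
    split at hfix
    · next hP =>
      have hspec := hP.choose_spec
      rw [hfix] at hspec
      rcases hspec with ⟨c', i, hc', -, hk, -⟩ | ⟨c', i, hc', -, hk, -⟩ | ⟨hn, -⟩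
      · omega
      · omega
      · rw [h] at hn; exact Option.some_ne_none _ hn
    · next hP => exact hP hex
  · intro hn
    have hex : ∃ T', PhiRel T T' := ⟨T, Or.inr (Or.inr ⟨hn, rfl⟩)⟩
    rw [Phi]
    split
    · next hP =>
      have hspec := hP.choose_spec
      rcases hspec with ⟨c', i, hc', -⟩ | ⟨c', i, hc', -⟩ | ⟨-, hT⟩
      · rw [hn] at hc'; exact (Option.some_ne_none _ hc'.symm).elim
      · rw [hn] at hc'; exact (Option.some_ne_none _ hc'.symm).elim
      · exact hT
    · next hP => exact absurd hex hP

end PhiFixed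
section FixedStructure
open Classical
variable {μ lam : YoungDiagram}

lemma piece_nonempty (T : XTuple μ lam) {i : ℕ} (hi : i < T.k) : (pieceCells T i).Nonempty := by
  obtain ⟨x, hx1, hx2⟩ := Finset.exists_of_ssubset (T.chain_strict i hi)
  exact ⟨x, by rw [pieceCells, Finset.mem_sdiff]; exact ⟨hx1, hx2⟩⟩

lemma piece_card_one {T : XTuple μ lam} (hn : cellOf T = none) {i : ℕ} (hi : i < T.k) :
    (pieceCells T i).card = 1 := by
  have hne := piece_nonempty T hi
  by_contra hcard
  have h1 : 1 < (pieceCells T i).card := by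
    rcases Nat.lt_or_ge 1 (pieceCells T i).card with h | h
    · exact h
    · exact absurd (le_antisymm h (Finset.card_pos.mpr hne)) hcard
  obtain ⟨c, hc, hmax⟩ := Finset.exists_max_image (pieceCells T i) (keyf T.entry) hne
  have hsplit : SplittableAt T c i := by
    refine ⟨hi, hc, h1, fun c' hc' hne' => ?_⟩
    rw [cellLT_iff_keyf]
    exact lt_of_le_of_ne (hmax c' hc') (fun h => hne' (keyf_injective _ h))
  exact cellOf_ne_none T ⟨c, Or.inl ⟨i, hsplit⟩⟩ hn

/-- The unique cell of piece `i` (for a fixed point). -/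
noncomputable def cseq (T : XTuple μ lam) (i : ℕ) : ℕ × ℕ :=
  if h : (pieceCells T i).Nonempty then h.choose else (0, 0)

lemma cseq_mem (T : XTuple μ lam) {i : ℕ} (hi : i < T.k) : cseq T i ∈ pieceCells T i := by
  rw [cseq, dif_pos (piece_nonempty T hi)]
  exact (piece_nonempty T hi).choose_spec

lemma piece_eq_singleton {T : XTuple μ lam} (hn : cellOf T = none) {i : ℕ} (hi : i < T.k) :
    pieceCells T i = {cseq T i} :=
  Finset.eq_singleton_iff_unique_mem.mpr ⟨cseq_mem T hi, fun x hx => by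
    have := Finset.card_eq_one.mp (piece_card_one hn hi)
    obtain ⟨a, ha⟩ := this
    rw [ha, Finset.mem_singleton] at hx
    have := cseq_mem T hi
    rw [ha, Finset.mem_singleton] at this
    rw [hx, this]⟩

lemma cseq_entry_pos (T : XTuple μ lam) {i : ℕ} (hi : i < T.k) : 0 < T.entry (cseq T i) :=
  (T.piece_ssyt i hi).1 _ (cseq_mem T hi)

lemma cseq_ne {T : XTuple μ lam} {a b : ℕ} (hab : a ≠ b) (ha : a < T.k) (hb : b < T.k) :
    cseq T a ≠ cseq T b := by
  intro h
  exact hab (piece_unique T (cseq_mem T ha) (h ▸ cseq_mem T hb))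

lemma cseq_succ_lt {T : XTuple μ lam} (hn : cellOf T = none) {a : ℕ} (ha : a + 1 < T.k) :
    keyf T.entry (cseq T (a+1)) < keyf T.entry (cseq T a) := by
  set f := T.entry
  set ca := cseq T a with hca
  set cb := cseq T (a+1) with hcb
  have hak : a < T.k := by omega
  have hma : ca ∈ pieceCells T a := cseq_mem T hak
  have hmb : cb ∈ pieceCells T (a+1) := cseq_mem T ha
  have hne : cb ≠ ca := cseq_ne (by omega) ha hak
  rw [← cellLT_iff_keyf]
  by_contra hnot
  have hlt : cellLT f ca cb := cellLT_of_ne_of_not hne (by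
    intro h; exact hnot (by rwa [cellLT_iff_keyf] at h ⊢) )
  -- show MergeableAt T cb (a+1), contradiction
  have hpa : pieceCells T a = {ca} := piece_eq_singleton hn hak
  have hpb : pieceCells T (a+1) = {cb} := piece_eq_singleton hn ha
  have hssyt : IsSSYTOn f (pieceCells T (a + 1 - 1) ∪ pieceCells T (a+1)) := by
    rw [Nat.add_sub_cancel, hpa, hpb]
    refine ⟨?_, ?_, ?_⟩
    · intro x hx
      rw [Finset.mem_union, Finset.mem_singleton, Finset.mem_singleton] at hx
      rcases hx with rfl | rfl
      · exact cseq_entry_pos T hak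
      · exact cseq_entry_pos T ha
    · intro i j j' hj h1 h2
      rw [Finset.mem_union, Finset.mem_singleton, Finset.mem_singleton] at h1 h2
      rcases h1 with h1 | h1 <;> rcases h2 with h2 | h2
      · rw [h1, h2]
      · -- (i,j) = ca, (i,j') = cb
        rcases hlt with h | ⟨h, -⟩
        · exact le_of_lt (h1 ▸ h2 ▸ h)
        · exact le_of_eq (h1 ▸ h2 ▸ h)
      · -- (i,j) = cb, (i,j') = ca : cb weakly up-left of ca, later piece: impossible
        exact (not_up_left T hmb hma (Nat.lt_succ_self a)
          (by rw [← h1, ← h2]) (by rw [← h1, ← h2]; exact hj)).elim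
      · rw [h1, h2]
    · intro i i' j hi h1 h2
      rw [Finset.mem_union, Finset.mem_singleton, Finset.mem_singleton] at h1 h2
      rcases h1 with h1 | h1 <;> rcases h2 with h2 | h2
      · rw [← h2] at h1
        exact absurd (congrArg Prod.fst h1) (by simp; omega)
      · -- ca above cb, same column
        rcases hlt with h | ⟨h, h' | ⟨h', h''⟩⟩
        · exact h1 ▸ h2 ▸ h
        · exfalso; rw [← h1, ← h2] at h'; simp at h'
        · exfalso; rw [← h1, ← h2] at h''; simp at h''; omega
      · -- cb above ca, same column: impossible
        exact (not_up_left T hmb hma (Nat.lt_succ_self a)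
          (by rw [← h1, ← h2]; simp; omega) (by rw [← h1, ← h2])).elim
      · rw [← h2] at h1
        exact absurd (congrArg Prod.fst h1) (by simp; omega)
  have hmerge : MergeableAt T cb (a+1) := by
    refine ⟨Nat.le_add_left 1 a, ha, hmb, by rw [hpb]; exact Finset.card_singleton _, hssyt, ?_⟩
    intro c' hc'
    rw [Nat.add_sub_cancel, hpa, Finset.mem_singleton] at hc'
    exact hc' ▸ hlt
  exact cellOf_ne_none T ⟨cb, Or.inr ⟨a+1, hmerge⟩⟩ hn

lemma cseq_strict_anti {T : XTuple μ lam} (hn : cellOf T = none) {a b : ℕ}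
    (hab : a < b) (hb : b < T.k) :
    keyf T.entry (cseq T b) < keyf T.entry (cseq T a) := by
  induction b with
  | zero => omega
  | succ n ih =>
    rcases Nat.lt_or_ge a n with h | h
    · exact lt_trans (cseq_succ_lt hn hb) (ih h (by omega))
    · have : a = n := by omega
      subst this
      exact cseq_succ_lt hn hb

end FixedStructure
section RSPPofFixed
open Classical
variable {μ lam : YoungDiagram}

lemma mem_skew_eq_cseq {T : XTuple μ lam} (hn : cellOf T = none) {c : ℕ × ℕ}
    (hc : c ∈ skewCells μ lam) : ∃ a < T.k, c = cseq T a := by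
  obtain ⟨a, hak, hca⟩ := exists_piece_mem T hc
  refine ⟨a, hak, ?_⟩
  have := piece_eq_singleton hn hak
  rw [this, Finset.mem_singleton] at hca
  exact hca

lemma rspp_of_fixed {T : XTuple μ lam} (hn : cellOf T = none) :
    IsRSPPOn T.entry (skewCells μ lam) := by
  set f := T.entry
  refine ⟨?_, ?_, ?_⟩
  · intro c hc
    obtain ⟨a, hak, rfl⟩ := mem_skew_eq_cseq hn hc
    exact cseq_entry_pos T hak
  · intro i j j' hj h1 h2
    obtain ⟨a, hak, ha⟩ := mem_skew_eq_cseq hn h1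
    obtain ⟨b, hbk, hb⟩ := mem_skew_eq_cseq hn h2
    have hab : a < b := by
      rcases lt_trichotomy a b with h | h | h
      · exact h
      · exfalso; rw [← h, ← ha] at hb
        have := congrArg Prod.snd hb
        simp only at this; omega
      · have hma : ((i,j) : ℕ × ℕ) ∈ pieceCells T a := by rw [ha]; exact cseq_mem T hak
        have hmb : ((i,j') : ℕ × ℕ) ∈ pieceCells T b := by rw [hb]; exact cseq_mem T hbk
        exact (not_up_left T hma hmb h (le_refl i) (le_of_lt hj)).elim
    have hkey := cseq_strict_anti hn hab hbk
    rw [← cellLT_iff_keyf, ← ha, ← hb] at hkey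
    rcases hkey with h | ⟨-, h' | ⟨h', -⟩⟩
    · exact h
    · simp only at h'; omega
    · simp only at h'; omega
  · intro i i' j hi h1 h2
    rcases Nat.eq_or_lt_of_le hi with h | h
    · subst h; exact le_refl _
    obtain ⟨a, hak, ha⟩ := mem_skew_eq_cseq hn h1
    obtain ⟨b, hbk, hb⟩ := mem_skew_eq_cseq hn h2
    have hab : a < b := by
      rcases lt_trichotomy a b with h' | h' | h'
      · exact h'
      · exfalso; rw [← h', ← ha] at hb
        have := congrArg Prod.fst hb
        simp only at this; omega
      · have hma : ((i,j) : ℕ × ℕ) ∈ pieceCells T a := by rw [ha]; exact cseq_mem T hak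
        have hmb : ((i',j) : ℕ × ℕ) ∈ pieceCells T b := by rw [hb]; exact cseq_mem T hbk
        exact (not_up_left T hma hmb h' (le_of_lt h) (le_refl j)).elim
    have hkey := cseq_strict_anti hn hab hbk
    rw [← cellLT_iff_keyf, ← ha, ← hb] at hkey
    rcases hkey with h' | ⟨h', -⟩
    · exact le_of_lt h'
    · exact le_of_eq h'

end RSPPofFixed
section MkT
open Classical

lemma cells_up_left (ν : YoungDiagram) {c c' : ℕ × ℕ} (h1 : c.1 ≤ c'.1) (h2 : c.2 ≤ c'.2)
    (hc' : c' ∈ ν.cells) : c ∈ ν.cells := by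
  rw [YoungDiagram.mem_cells] at *
  have := YoungDiagram.up_left_mem ν h1 h2 (show (c'.1, c'.2) ∈ ν by simpa using hc')
  simpa using this

/-- The decreasing order on cells relative to a filling `f`. -/
def rdec (f : ℕ × ℕ → ℕ) (a b : ℕ × ℕ) : Prop := keyf f b ≤ keyf f a

instance rdec_trans (f : ℕ × ℕ → ℕ) : IsTrans (ℕ × ℕ) (rdec f) :=
  ⟨fun _ _ _ h1 h2 => le_trans h2 h1⟩

instance rdec_antisymm (f : ℕ × ℕ → ℕ) : IsAntisymm (ℕ × ℕ) (rdec f) :=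
  ⟨fun _ _ h1 h2 => keyf_injective f (le_antisymm h2 h1)⟩

instance rdec_total (f : ℕ × ℕ → ℕ) : IsTotal (ℕ × ℕ) (rdec f) :=
  ⟨fun a b => (le_total (keyf f b) (keyf f a)).imp id id⟩

noncomputable instance rdec_dec (f : ℕ × ℕ → ℕ) : DecidableRel (rdec f) :=
  fun _ _ => Classical.dec _

/-- The cells of `λ/μ` listed in decreasing `keyf f` order. -/
noncomputable def sortedCells (f : ℕ × ℕ → ℕ) (μ lam : YoungDiagram) : List (ℕ × ℕ) :=
  (skewCells μ lam).sort (rdec f)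

variable {μ lam : YoungDiagram} {f : ℕ × ℕ → ℕ}

lemma key_lt_of_le (hf : IsRSPPOn f (skewCells μ lam)) {x y : ℕ × ℕ}
    (hx : x ∈ skewCells μ lam) (hy : y ∈ skewCells μ lam) (h1 : y.1 ≤ x.1) (h2 : y.2 ≤ x.2)
    (hne : y ≠ x) : keyf f x < keyf f y := by
  rw [← cellLT_iff_keyf]
  have hmid : (y.1, x.2) ∈ skewCells μ lam := by
    rw [skewCells, Finset.mem_sdiff] at hx hy ⊢
    refine ⟨cells_up_left lam (c := (y.1, x.2)) (c' := x) h1 (le_refl _) hx.1, fun hmem => ?_⟩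
    exact hy.2 (cells_up_left μ (c := y) (c' := (y.1, x.2)) (le_refl _) h2 hmem)
  have hy' : ((y.1, y.2) : ℕ × ℕ) ∈ skewCells μ lam := by rw [Prod.mk.eta]; exact hy
  have hx' : ((x.1, x.2) : ℕ × ℕ) ∈ skewCells μ lam := by rw [Prod.mk.eta]; exact hx
  have hcol : f (x.1, x.2) ≤ f (y.1, x.2) := hf.2.2 y.1 x.1 x.2 h1 hmid hx'
  rcases Nat.lt_or_ge y.2 x.2 with h | h
  · have hrow : f (y.1, x.2) < f (y.1, y.2) := hf.2.1 y.1 y.2 x.2 h hy' hmid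
    left
    rw [Prod.mk.eta] at hcol hrow
    omega
  · have h22 : y.2 = x.2 := by omega
    have h11 : y.1 < x.1 := by
      rcases Nat.lt_or_ge y.1 x.1 with h' | h'
      · exact h'
      · exact absurd (Prod.ext (by omega) h22) hne
    have hyx : ((y.1, x.2) : ℕ × ℕ) = y := Prod.ext rfl h22.symm
    rw [hyx, Prod.mk.eta] at hcol
    rcases Nat.lt_or_ge (f x) (f y) with h' | h'
    · exact Or.inl h'
    · exact Or.inr ⟨by omega, Or.inr ⟨h22.symm, h11⟩⟩

lemma sorted_take_closed {j : ℕ} {a b : ℕ × ℕ} (ha : a ∈ (sortedCells f μ lam).take j)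
    (hb : b ∈ sortedCells f μ lam) (hkey : keyf f a < keyf f b) :
    b ∈ (sortedCells f μ lam).take j := by
  set L := sortedCells f μ lam with hL
  by_contra hnb
  have hsplit : L = L.take j ++ L.drop j := (List.take_append_drop j L).symm
  have hbd : b ∈ L.drop j := by
    rw [hsplit] at hb
    rcases List.mem_append.mp hb with h | h
    · exact absurd h hnb
    · exact h
  have hsorted : List.Pairwise (rdec f) L := Finset.pairwise_sort _ (rdec f)
  rw [hsplit] at hsorted
  have := (List.pairwise_append.mp hsorted).2.2 a ha b hbd
  exact absurd hkey (not_lt.mpr this)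

lemma length_sortedCells : (sortedCells f μ lam).length = (skewCells μ lam).card :=
  Finset.length_sort _

lemma mem_sortedCells {c : ℕ × ℕ} : c ∈ sortedCells f μ lam ↔ c ∈ skewCells μ lam :=
  Finset.mem_sort _

/-- The `j`-th diagram in the canonical chain associated to a row-strict plane partition. -/
noncomputable def mkChain (hsub : μ ≤ lam) (hf : IsRSPPOn f (skewCells μ lam)) (j : ℕ) :
    YoungDiagram where
  cells := μ.cells ∪ ((sortedCells f μ lam).take j).toFinset
  isLowerSet := by
    intro a b hba ha
    simp only [Finset.coe_union, Set.mem_union, Finset.mem_coe, List.coe_toFinset,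
      Set.mem_setOf_eq] at ha ⊢
    by_cases hbmu : b ∈ μ.cells
    · exact Or.inl hbmu
    rcases ha with ha | ha
    · exact absurd (cells_up_left μ hba.1 hba.2 ha) hbmu
    right
    have haskew : a ∈ skewCells μ lam := mem_sortedCells.mp (List.mem_of_mem_take ha)
    have hbskew : b ∈ skewCells μ lam := by
      rw [skewCells, Finset.mem_sdiff] at haskew ⊢
      exact ⟨cells_up_left lam hba.1 hba.2 haskew.1, hbmu⟩
    by_cases hab : b = a
    · rwa [hab]
    exact sorted_take_closed ha (mem_sortedCells.mpr hbskew)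
      (key_lt_of_le hf haskew hbskew hba.1 hba.2 hab)

lemma mkChain_take_get (hnd : (sortedCells f μ lam).Nodup) {j : ℕ}
    (hj : j < (sortedCells f μ lam).length) :
    ((sortedCells f μ lam).take (j+1)).toFinset
      = ((sortedCells f μ lam).take j).toFinset ∪ {(sortedCells f μ lam).get ⟨j, hj⟩} ∧
    (sortedCells f μ lam).get ⟨j, hj⟩ ∉ ((sortedCells f μ lam).take j).toFinset := by
  set L := sortedCells f μ lam with hL
  have htake : L.take (j+1) = L.take j ++ [L.get ⟨j, hj⟩] := by
    rw [List.take_succ, List.getElem?_eq_getElem hj]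
    simp
  constructor
  · rw [htake, List.toFinset_append]
    simp; rfl
  · intro hmem
    have hdisj := List.disjoint_of_nodup_append
      (show (L.take j ++ L.drop j).Nodup from (List.take_append_drop j L).symm ▸ hnd)
    have hget : L.get ⟨j, hj⟩ ∈ L.drop j := by
      have h0 : (L.drop j)[0]'(by simp [List.length_drop]; omega) = L[j] := by
        simp [List.getElem_drop]
      rw [List.get_eq_getElem, ← h0]
      exact List.getElem_mem _
    exact hdisj (List.mem_toFinset.mp hmem) hget

/-- The canonical fixed point of `Φ` associated to a row-strict plane partition. -/
noncomputable def mkT (hsub : μ ≤ lam) (hf : IsRSPPOn f (skewCells μ lam))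
    (hz : ∀ c ∉ skewCells μ lam, f c = 0) : XTuple μ lam where
  k := (skewCells μ lam).card
  chain := mkChain hsub hf
  chain_zero := by
    apply YoungDiagram.ext
    show μ.cells ∪ ((sortedCells f μ lam).take 0).toFinset = μ.cells
    simp
  chain_last := by
    intro j hj
    apply YoungDiagram.ext
    show μ.cells ∪ ((sortedCells f μ lam).take j).toFinset = lam.cells
    rw [List.take_of_length_le (by rw [length_sortedCells]; omega)]
    have : (sortedCells f μ lam).toFinset = skewCells μ lam := Finset.sort_toFinset _ _
    rw [this, skewCells, Finset.union_sdiff_of_subset (YoungDiagram.cells_subset_iff.mpr hsub)]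
  chain_strict := by
    intro j hj
    have hj' : j < (sortedCells f μ lam).length := by rw [length_sortedCells]; omega
    obtain ⟨heq, hnot⟩ := mkChain_take_get (Finset.sort_nodup _ _) hj'
    show μ.cells ∪ _ ⊂ μ.cells ∪ _
    rw [heq]
    constructor
    · intro x hx
      rw [Finset.mem_union] at hx ⊢
      rcases hx with hx | hx
      · exact Or.inl hx
      · exact Or.inr (Finset.mem_union_left _ hx)
    · intro hsubs
      have hg : (sortedCells f μ lam).get ⟨j, hj'⟩ ∈
          μ.cells ∪ (((sortedCells f μ lam).take j).toFinset ∪ {(sortedCells f μ lam).get ⟨j, hj'⟩}) := by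
        simp
      have := hsubs hg
      rw [Finset.mem_union] at this
      rcases this with h | h
      · have hsk : (sortedCells f μ lam).get ⟨j, hj'⟩ ∈ skewCells μ lam :=
          mem_sortedCells.mp (List.get_mem _ _)
        rw [skewCells, Finset.mem_sdiff] at hsk
        exact hsk.2 h
      · exact hnot h
  entry := f
  entry_eq_zero := hz
  piece_ssyt := by
    intro j hj
    have hj' : j < (sortedCells f μ lam).length := by rw [length_sortedCells]; omega
    obtain ⟨heq, hnot⟩ := mkChain_take_get (Finset.sort_nodup _ _) hj'
    have hset : (mkChain hsub hf (j+1)).cells \ (mkChain hsub hf j).cells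
        = {(sortedCells f μ lam).get ⟨j, hj'⟩} := by
      show (μ.cells ∪ _) \ (μ.cells ∪ _) = _
      rw [heq]
      ext x
      simp only [Finset.mem_sdiff, Finset.mem_union, Finset.mem_singleton]
      constructor
      · rintro ⟨h1 | (h1 | h1), h2⟩
        · exact absurd (Or.inl h1) h2
        · exact absurd (Or.inr h1) h2
        · exact h1
      · rintro rfl
        refine ⟨Or.inr (Or.inr rfl), ?_⟩
        rintro (h | h)
        · have hsk : (sortedCells f μ lam).get ⟨j, hj'⟩ ∈ skewCells μ lam :=
            mem_sortedCells.mp (List.get_mem _ _)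
          rw [skewCells, Finset.mem_sdiff] at hsk
          exact hsk.2 h
        · exact hnot h
    rw [hset]
    exact ssyt_singleton (hf.1 _ (mem_sortedCells.mp (List.get_mem _ _)))

lemma mkT_fixed (hsub : μ ≤ lam) (hf : IsRSPPOn f (skewCells μ lam))
    (hz : ∀ c ∉ skewCells μ lam, f c = 0) : cellOf (mkT hsub hf hz) = none := by
  set T := mkT hsub hf hz with hT
  apply cellOf_eq_none_of_empty
  intro c
  have hpiece : ∀ i (hi : i < T.k), pieceCells T i
      = {(sortedCells f μ lam).get ⟨i, by rw [length_sortedCells]; exact hi⟩} := by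
    intro i hi
    have hj' : i < (sortedCells f μ lam).length := by rw [length_sortedCells]; exact hi
    obtain ⟨heq, hnot⟩ := mkChain_take_get (Finset.sort_nodup _ _) hj'
    show (μ.cells ∪ _) \ (μ.cells ∪ _) = _
    rw [heq]
    ext x
    simp only [Finset.mem_sdiff, Finset.mem_union, Finset.mem_singleton]
    constructor
    · rintro ⟨h1 | (h1 | h1), h2⟩
      · exact absurd (Or.inl h1) h2
      · exact absurd (Or.inr h1) h2
      · exact h1
    · rintro rfl
      refine ⟨Or.inr (Or.inr rfl), ?_⟩
      rintro (h | h)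
      · have hsk : (sortedCells f μ lam).get ⟨i, hj'⟩ ∈ skewCells μ lam :=
          mem_sortedCells.mp (List.get_mem _ _)
        rw [skewCells, Finset.mem_sdiff] at hsk
        exact hsk.2 h
      · exact hnot h
  constructor
  · rintro ⟨i, hik, hcmem, hcard, -⟩
    rw [hpiece i hik] at hcard
    simp at hcard
  · rintro ⟨i, hi1, hik, hcmem, -, -, hall⟩
    have hTk : T.k = (skewCells μ lam).card := rfl
    have hik1 : i - 1 < T.k := by omega
    have hkey := hall _ (by rw [hpiece (i-1) hik1]; exact Finset.mem_singleton_self _)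
    rw [hpiece i hik, Finset.mem_singleton] at hcmem
    subst hcmem
    rw [cellLT_iff_keyf] at hkey
    have hsorted : List.Pairwise (rdec f) (sortedCells f μ lam) := Finset.pairwise_sort _ _
    have hrel := hsorted.rel_get_of_lt
      (a := ⟨i - 1, by rw [length_sortedCells]; omega⟩)
      (b := ⟨i, by rw [length_sortedCells]; omega⟩)
      (by simp; omega)
    rw [rdec] at hrel
    have : T.entry = f := rfl
    rw [this] at hkey
    exact absurd hkey (not_lt.mpr hrel)

end MkT
section Uniqueness
open Classical
variable {μ lam : YoungDiagram}

lemma XTuple.ext' {T T' : XTuple μ lam} (hk : T.k = T'.k)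
    (hc : ∀ j, (T.chain j).cells = (T'.chain j).cells) (he : T.entry = T'.entry) :
    T = T' := by
  have hchain : T.chain = T'.chain := funext fun j => YoungDiagram.ext (hc j)
  cases T; cases T'
  simp only at hk hchain he
  subst hk; subst hchain; subst he
  rfl

lemma fixed_eq_mkT {T : XTuple μ lam} (hsub : μ ≤ lam) (hn : cellOf T = none)
    (hf : IsRSPPOn T.entry (skewCells μ lam)) :
    T = mkT hsub hf T.entry_eq_zero := by
  set f := T.entry with hfdef
  set M : List (ℕ × ℕ) := (List.range T.k).map (cseq T) with hM
  have hMlen : M.length = T.k := by simp [hM]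
  have hMget : ∀ (a : ℕ) (h : a < M.length), M.get ⟨a, h⟩ = cseq T a := by
    intro a h
    simp [hM]
  have hMs : List.Pairwise (rdec f) M := by
    rw [List.pairwise_iff_get]
    intro i j hij
    rw [hMget i i.isLt, hMget j j.isLt, rdec]
    exact le_of_lt (cseq_strict_anti hn hij (by have := j.isLt; omega))
  have hMnd : M.Nodup := by
    refine List.Nodup.map_on ?_ List.nodup_range
    intro x hx y hy hxy
    rw [List.mem_range] at hx hy
    by_contra hne
    exact cseq_ne hne hx hy hxy
  have hMtF : M.toFinset = skewCells μ lam := by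
    ext c
    simp only [hM, List.mem_toFinset, List.mem_map, List.mem_range]
    constructor
    · rintro ⟨a, ha, rfl⟩
      exact pieceCells_sub_skew T a (cseq_mem T ha)
    · intro hc
      obtain ⟨a, ha, hca⟩ := mem_skew_eq_cseq hn hc
      exact ⟨a, ha, hca.symm⟩
  have hML : M = sortedCells f μ lam :=
    List.Perm.eq_of_pairwise (fun a b _ _ h1 h2 => keyf_injective f (le_antisymm h2 h1))
      hMs (show List.Pairwise (rdec f) (sortedCells f μ lam) from Finset.pairwise_sort _ _)
      (List.perm_of_nodup_nodup_toFinset_eq hMnd (Finset.sort_nodup _ _)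
        (hMtF.trans (Finset.sort_toFinset _ _).symm))
  have hkcard : T.k = (skewCells μ lam).card := by
    rw [← @length_sortedCells μ lam f, ← hML, hMlen]
  have hchain : ∀ j, (T.chain j).cells = μ.cells ∪ (M.take j).toFinset := by
    intro j
    induction j with
    | zero => simp [T.chain_zero]
    | succ j ih =>
      rcases Nat.lt_or_ge j T.k with h | h
      · have hjM : j < M.length := by omega
        have htake : M.take (j+1) = M.take j ++ [M.get ⟨j, hjM⟩] := by
          rw [List.take_succ, List.getElem?_eq_getElem hjM]
          simp
        have hunion : (T.chain (j+1)).cells = (T.chain j).cells ∪ pieceCells T j := by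
          rw [pieceCells, Finset.union_sdiff_of_subset (chain_sub_succ T j)]
        rw [hunion, piece_eq_singleton hn h, ih, htake, List.toFinset_append]
        simp only [List.toFinset_cons, List.toFinset_nil, insert_empty_eq, hMget j hjM]
        rw [Finset.union_assoc]
      · have h1 : T.chain (j+1) = lam := T.chain_last _ (by omega)
        have h2 : T.chain j = lam := T.chain_last _ h
        have h3 : M.take (j+1) = M := List.take_of_length_le (by omega)
        have h4 : M.take j = M := List.take_of_length_le (by omega)
        rw [h1, ← h2, ih, h3, h4]
  refine XTuple.ext' ?_ ?_ rfl
  · exact hkcard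
  · intro j
    show (T.chain j).cells = μ.cells ∪ ((sortedCells f μ lam).take j).toFinset
    rw [← hML, hchain j]

lemma mkT_congr {f g : ℕ × ℕ → ℕ} (hsub : μ ≤ lam) (h : f = g)
    (hf : IsRSPPOn f (skewCells μ lam)) (hz : ∀ c ∉ skewCells μ lam, f c = 0)
    (hg : IsRSPPOn g (skewCells μ lam)) (hzg : ∀ c ∉ skewCells μ lam, g c = 0) :
    mkT hsub hf hz = mkT hsub hg hzg := by
  subst h; rfl

end Uniqueness
/-- The concatenation map `T = (T⁽¹⁾, …, T⁽ᵏ⁾) ↦ ⊔ᵢ T⁽ⁱ⁾` (here: `T ↦ T.entry`, the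
concatenated filling, normalized to `0` outside `λ/μ`) is a bijection from the set
`Fix(λ/μ)` of fixed points of `Φ` onto the set `RSPP(λ/μ)` of row-strict plane partitions
of shape `λ/μ`, and it preserves the weight: `wt(T) = x^{⊔ᵢ T⁽ⁱ⁾}`. -/
theorem fix_bijOn_rspp (μ lam : YoungDiagram) (hsub : μ ≤ lam) :
    Set.BijOn (fun T : XTuple μ lam => T.entry)
      {T : XTuple μ lam | Phi T = T}
      {f : ℕ × ℕ → ℕ |
        IsRSPPOn f (skewCells μ lam) ∧ ∀ c ∉ skewCells μ lam, f c = 0} ∧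
    ∀ T : XTuple μ lam, Phi T = T →
      wt T = ∏ c ∈ skewCells μ lam, (MvPolynomial.X (T.entry c) : MvPolynomial ℕ ℤ) := by
  refine ⟨⟨?_, ?_, ?_⟩, fun T _ => rfl⟩
  · -- MapsTo
    intro T hT
    have hn : cellOf T = none := (phi_fixed_iff T).mp hT
    exact ⟨rspp_of_fixed hn, T.entry_eq_zero⟩
  · -- InjOn
    intro T1 h1 T2 h2 he
    simp only [Set.mem_setOf_eq] at h1 h2
    have hn1 : cellOf T1 = none := (phi_fixed_iff T1).mp h1
    have hn2 : cellOf T2 = none := (phi_fixed_iff T2).mp h2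
    simp only at he
    rw [fixed_eq_mkT hsub hn1 (rspp_of_fixed hn1), fixed_eq_mkT hsub hn2 (rspp_of_fixed hn2)]
    exact mkT_congr hsub he _ _ _ _
  · -- SurjOn
    intro f hf
    simp only [Set.mem_setOf_eq] at hf
    refine ⟨mkT hsub hf.1 hf.2, ?_, rfl⟩
    simp only [Set.mem_setOf_eq]
    exact (phi_fixed_iff _).mpr (mkT_fixed hsub hf.1 hf.2)
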